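/- One has range d_1 ⊆ ker d_2, and the quotient k-vector space ker d_2 / range d_1 is finite dimensional of dimension n − 1. (This is the computation HH²(Δ) ≅ k^{n−1} of the degree-2 Hochschild cohomology of the diagonal bimodule of the KLRW algebra with n punctures.) -/
import Mathlib


/-- The index set `S_1 = {s_i} ∪ {p_{i+1}} ∪ {q_i}` (here `p i` stands for `p_{i+1}`). -/
inductive S1 (n : ℕ) where
  | s (i : Fin (n + 1))
  | p (i : Fin n)
  | q (i : Fin n)

/-- The index sets `S_2` and `S_3`: the ambiguities `P^m_{i+1}, Q^m_i, sP^m_{i+1}, sQ^m_i`. -/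
inductive Shi (n : ℕ) where
  | P (i : Fin n)
  | Q (i : Fin n)
  | sP (i : Fin n)
  | sQ (i : Fin n)

/-- `(prev φ) ℓ w = φ_{ℓ−1}(w)` with the convention `φ_{−1} = 0`. -/
def prev {k σ : Type*} [Field k] (φ : ℕ → σ → k) : ℕ → σ → k
  | 0, _ => 0
  | ℓ + 1, w => φ ℓ w

variable (n : ℕ) (k : Type*) [Field k]

/-- The differential `d_1 : C¹ → C²`. -/
def d1 (φ : ℕ → S1 n → k) : ℕ → Shi n → k := fun ℓ w =>
  match w with
  | .P i => prev φ ℓ (.p i) + prev φ ℓ (.q i) - φ ℓ (.s i.succ)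
  | .Q i => prev φ ℓ (.q i) + prev φ ℓ (.p i) - φ ℓ (.s i.castSucc)
  | .sP i => φ ℓ (.s i.succ) - φ ℓ (.s i.castSucc)
  | .sQ i => φ ℓ (.s i.castSucc) - φ ℓ (.s i.succ)

/-- The differential `d_2 : C² → C³`. -/
def d2 (φ : ℕ → Shi n → k) : ℕ → Shi n → k := fun ℓ w =>
  match w with
  | .P i => φ ℓ (.P i) - φ ℓ (.Q i) + φ ℓ (.sP i)
  | .Q i => φ ℓ (.Q i) - φ ℓ (.P i) + φ ℓ (.sQ i)
  | .sP i => prev φ ℓ (.sP i) + prev φ ℓ (.sQ i)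
  | .sQ i => prev φ ℓ (.sQ i) + prev φ ℓ (.sP i)

/-- `d_1` as a `k`-linear map. -/
def d1L : (ℕ → S1 n → k) →ₗ[k] (ℕ → Shi n → k) where
  toFun := d1 n k
  map_add' φ ψ := by
    funext ℓ w
    cases w <;> cases ℓ <;> simp [d1, prev] <;> ring
  map_smul' c φ := by
    funext ℓ w
    cases w <;> cases ℓ <;> simp [d1, prev] <;> ring

/-- `d_2` as a `k`-linear map. -/
def d2L : (ℕ → Shi n → k) →ₗ[k] (ℕ → Shi n → k) where
  toFun := d2 n k
  map_add' φ ψ := by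
    funext ℓ w
    cases w <;> cases ℓ <;> simp [d2, prev] <;> ring
  map_smul' c φ := by
    funext ℓ w
    cases w <;> cases ℓ <;> simp [d2, prev] <;> ring

/-- Telescoping partial sums `T φ ℓ j = ∑_{m<j} (φ_ℓ(Q_m) − φ_ℓ(P_m))`. -/
def Tsum (φ : ℕ → Shi n → k) (ℓ : ℕ) : ℕ → k
  | 0 => 0
  | j + 1 => Tsum φ ℓ j + (if h : j < n then φ ℓ (.Q ⟨j, h⟩) - φ ℓ (.P ⟨j, h⟩) else 0)

/-- The functional cutting out `range d_1` inside `ker d_2`. -/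
def Fmap : (ℕ → Shi n → k) →ₗ[k] (Fin (n - 1) → k) where
  toFun φ := fun i => φ 0 (.P ⟨i.val, by have := i.isLt; omega⟩)
    - φ 0 (.Q ⟨i.val + 1, by have := i.isLt; omega⟩)
  map_add' φ ψ := by funext i; simp only [Pi.add_apply]; ring
  map_smul' c φ := by funext i; simp only [Pi.smul_apply, smul_eq_mul, RingHom.id_apply]; ring

lemma mem_range_d1 (hn : 0 < n) (φ : ℕ → Shi n → k) (hker : d2 n k φ = 0)
    (hF : ∀ (i : ℕ) (h : i + 1 < n), φ 0 (.P ⟨i, by omega⟩) = φ 0 (.Q ⟨i + 1, h⟩)) :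
    φ ∈ LinearMap.range (d1L n k) := by
  have hP : ∀ ℓ (i : Fin n), φ ℓ (.sP i) = φ ℓ (.Q i) - φ ℓ (.P i) := by
    intro ℓ i
    have := congrFun (congrFun hker ℓ) (.P i)
    simp only [d2, Pi.zero_apply] at this
    linear_combination this
  have hQ : ∀ ℓ (i : Fin n), φ ℓ (.sQ i) = φ ℓ (.P i) - φ ℓ (.Q i) := by
    intro ℓ i
    have := congrFun (congrFun hker ℓ) (.Q i)
    simp only [d2, Pi.zero_apply] at this
    linear_combination this
  have hT1 : ∀ (i : ℕ) (h : i < n),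
      Tsum n k φ 0 (i + 1) = φ 0 (.Q ⟨0, hn⟩) - φ 0 (.P ⟨i, h⟩) := by
    intro i
    induction i with
    | zero => intro h; simp [Tsum, h]
    | succ j ih =>
      intro h
      have hj : j < n := by omega
      have hstep : Tsum n k φ 0 (j + 1 + 1)
          = Tsum n k φ 0 (j + 1) + (φ 0 (.Q ⟨j + 1, h⟩) - φ 0 (.P ⟨j + 1, h⟩)) := by
        simp [Tsum, h]
      rw [hstep, ih hj, hF j h]
      ring
  have hT2 : ∀ (i : ℕ) (h : i < n),
      Tsum n k φ 0 i = φ 0 (.Q ⟨0, hn⟩) - φ 0 (.Q ⟨i, h⟩) := by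
    intro i
    induction i with
    | zero => simp [Tsum]
    | succ j ih =>
      intro h
      have hj : j < n := by omega
      have : j + 1 < n ∨ j + 1 = n := by omega
      rw [hT1 j hj]
      rcases this with h' | h'
      · rw [hF j h']
      · omega
  refine ⟨fun ℓ w => match w with
    | .s j => Tsum n k φ ℓ j.val + (if ℓ = 0 then -(φ 0 (.Q ⟨0, hn⟩)) else 0)
    | .p i => φ (ℓ + 1) (.P i) + Tsum n k φ (ℓ + 1) (i.val + 1)
    | .q i => 0, ?_⟩
  show d1 n k _ = φ
  funext ℓ w
  have hTstep : ∀ ℓ' (i : Fin n), Tsum n k φ ℓ' (i.val + 1)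
      = Tsum n k φ ℓ' i.val + (φ ℓ' (.Q i) - φ ℓ' (.P i)) := by
    intro ℓ' i
    simp [Tsum, i.isLt]
  cases w with
  | P i =>
    cases ℓ with
    | zero =>
      simp only [d1, prev, Fin.val_succ]
      rw [hT1 i.val i.isLt]
      simp
    | succ m =>
      simp only [d1, prev, Fin.val_succ]
      simp
  | Q i =>
    cases ℓ with
    | zero =>
      simp only [d1, prev, Fin.coe_castSucc]
      rw [hT2 i.val i.isLt]
      simp
    | succ m =>
      simp only [d1, prev, Fin.coe_castSucc]
      rw [hTstep (m + 1) i]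
      simp
      ring
  | sP i =>
    simp only [d1, Fin.val_succ, Fin.coe_castSucc]
    rw [hTstep ℓ i, hP ℓ i]
    ring
  | sQ i =>
    simp only [d1, Fin.val_succ, Fin.coe_castSucc]
    rw [hTstep ℓ i, hQ ℓ i]
    ring

/-- `range d_1 ⊆ ker d_2`, and the quotient `ker d_2 / range d_1` is finite dimensional
of dimension `n − 1`.  (This is the computation `HH²(Δ) ≅ k^{n−1}` for the diagonal
bimodule of the KLRW algebra with `n` punctures.) -/
theorem HH2_of_diagonal (hn : 0 < n) :
    LinearMap.range (d1L n k) ≤ LinearMap.ker (d2L n k) ∧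
    Module.finrank k
        (LinearMap.ker (d2L n k) ⧸
          Submodule.comap (LinearMap.ker (d2L n k)).subtype (LinearMap.range (d1L n k)))
      = n - 1 := by
  have hsub : LinearMap.range (d1L n k) ≤ LinearMap.ker (d2L n k) := by
    rintro _ ⟨ψ, rfl⟩
    show d2L n k (d1L n k ψ) = 0
    show d2 n k (d1 n k ψ) = 0
    funext ℓ w
    cases w <;> cases ℓ <;> simp [d1, d2, prev] <;> ring
  refine ⟨hsub, ?_⟩
  set K := LinearMap.ker (d2L n k) with hK
  set G : K →ₗ[k] (Fin (n - 1) → k) := (Fmap n k) ∘ₗ K.subtype with hG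
  have hker : Submodule.comap K.subtype (LinearMap.range (d1L n k)) = LinearMap.ker G := by
    ext ⟨φ, hφ⟩
    simp only [Submodule.mem_comap, LinearMap.mem_ker, hG, LinearMap.comp_apply,
      Submodule.coe_subtype]
    constructor
    · rintro ⟨ψ, rfl⟩
      funext i
      show (Fmap n k) (d1 n k ψ) i = 0
      simp only [Fmap, LinearMap.coe_mk, AddHom.coe_mk, d1, prev]
      have heq : (⟨i.val, by have := i.isLt; omega⟩ : Fin n).succ
          = (⟨i.val + 1, by have := i.isLt; omega⟩ : Fin n).castSucc := by
        ext; simp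
      rw [heq]
      ring
    · intro h0
      refine mem_range_d1 n k hn φ ?_ ?_
      · have := hφ
        simpa [hK, LinearMap.mem_ker, d2L] using this
      · intro i hi
        have hi' : i < n - 1 := by omega
        have := congrFun h0 ⟨i, hi'⟩
        simp only [Fmap, LinearMap.coe_mk, AddHom.coe_mk, Pi.zero_apply] at this
        have := sub_eq_zero.mp this
        convert this using 3
  rw [hker]
  have hsurj : Function.Surjective G := by
    intro v
    set u : Fin n → k := fun i => if h : i.val < n - 1 then v ⟨i.val, h⟩ else 0 with hu
    set φv : ℕ → Shi n → k := fun ℓ w =>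
      if ℓ = 0 then (match w with
        | .P i => u i
        | .Q _ => 0
        | .sP i => -u i
        | .sQ i => u i) else 0 with hφv
    have hmem : φv ∈ K := by
      show d2 n k φv = 0
      funext ℓ w
      cases w with
      | P i => cases ℓ <;> simp [d2, prev, hφv]
      | Q i => cases ℓ <;> simp [d2, prev, hφv]
      | sP i =>
        cases ℓ with
        | zero => simp [d2, prev]
        | succ m => cases m <;> simp [d2, prev, hφv]
      | sQ i =>
        cases ℓ with
        | zero => simp [d2, prev]
        | succ m => cases m <;> simp [d2, prev, hφv]
    refine ⟨⟨φv, hmem⟩, ?_⟩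
    funext i
    show Fmap n k φv i = v i
    have hi := i.isLt
    simp only [Fmap, LinearMap.coe_mk, AddHom.coe_mk, hφv, hu]
    simp [hi]
  rw [(G.quotKerEquivOfSurjective hsurj).finrank_eq]
  simp [Module.finrank_fin_fun]
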